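/- Let (x_1, x_2) be a random vector and Y = f(x_1,x_2) square-integrable, measurable with respect to σ(x_1,x_2), with variance σ² > 0. Let φ_1, φ_2 be the Shapley values of the game val(u) = Var(E[Y | x_u]) on {1,2}. Then: (i) φ_1/σ² = (1/2)(1 + (Var(E[Y|x_1]) − Var(E[Y|x_2]))/σ²); (ii) φ_1/σ² = (1/2)(1 + (E[Var(Y|x_2)] − E[Var(Y|x_1)])/σ²); and (iii) φ_1/φ_2 = (Var(E[Y|x_1]) + E[Var(Y|x_2)]) / (Var(E[Y|x_2]) + E[Var(Y|x_1)]) provided the denominator is nonzero. -/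

import Mathlib

open Finset MeasureTheory ProbabilityTheory

/-- The Shapley value of player `j` for the cooperative game `val` on subsets of `Fin d`. -/
noncomputable def shapley {d : ℕ} (val : Finset (Fin d) → ℝ) (j : Fin d) : ℝ :=
  (d : ℝ)⁻¹ * ∑ u ∈ (Finset.univ.erase j).powerset,
    ((Nat.choose (d - 1) u.card : ℝ))⁻¹ * (val (insert j u) - val u)

/-- The σ-algebra generated by the variables `x j`, `j ∈ u`. -/
def mGen {Ω : Type*} {d : ℕ} (x : Fin d → Ω → ℝ) (u : Finset (Fin d)) :
    MeasurableSpace Ω :=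
  ⨆ j ∈ u, MeasurableSpace.comap (x j) Real.measurableSpace

/-- The conditional variance of `Y` given the σ-algebra `m`, as a function on `Ω`. -/
noncomputable def condVar {Ω : Type*} [MeasurableSpace Ω] (μ : Measure Ω)
    (m : MeasurableSpace Ω) (Y : Ω → ℝ) : Ω → ℝ :=
  μ[fun ω => (Y ω - (μ[Y | m]) ω) ^ 2 | m]

section Aux

variable {α : Type*}

lemma variance_congr_aux {_ : MeasurableSpace α} {μ : Measure α} {X X' : α → ℝ}
    (h : X =ᵐ[μ] X') : variance X μ = variance X' μ := by
  have hi : ∫ a, X a ∂μ = ∫ a, X' a ∂μ := integral_congr_ae h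
  unfold ProbabilityTheory.variance ProbabilityTheory.evariance
  congr 1
  refine lintegral_congr_ae (h.mono fun a ha => ?_)
  dsimp only
  rw [ha, hi]

lemma variance_const_aux {_ : MeasurableSpace α} (μ : Measure α) [IsProbabilityMeasure μ]
    (c : ℝ) : variance (fun _ => c) μ = 0 := by
  unfold ProbabilityTheory.variance ProbabilityTheory.evariance
  simp

lemma memℒp_two_condexp_aux {m m0 : MeasurableSpace α} (hm : m ≤ m0) (μ : @Measure α m0)
    [IsProbabilityMeasure μ] {Y : α → ℝ} (hY : MemLp Y 2 μ) : MemLp (μ[Y|m]) 2 μ := by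
  have hg : MemLp ((condExpL2 ℝ ℝ hm (hY.toLp Y) : α →₂[μ] ℝ) : α → ℝ) 2 μ :=
    Lp.memLp _
  have h : ((condExpL2 ℝ ℝ hm (hY.toLp Y) : α →₂[μ] ℝ) : α → ℝ) =ᵐ[μ] μ[Y|m] := by
    refine ae_eq_condExp_of_forall_setIntegral_eq hm (hY.integrable one_le_two)
      (fun s _ _ => (hg.integrable one_le_two).integrableOn)
      (fun s hs hμs => ?_) (aestronglyMeasurable_condExpL2 hm _)
    rw [integral_condExpL2_eq hm (hY.toLp Y) hs hμs.ne]
    exact setIntegral_congr_ae (hm s hs) ((hY.coeFn_toLp).mono fun ω hω _ => hω)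
  exact hg.ae_eq h

lemma total_variance_aux {m : MeasurableSpace α} {m0 : MeasurableSpace α} (hm : m ≤ m0)
    (μ : @Measure α m0) [IsProbabilityMeasure μ] {Y : α → ℝ} (hY : MemLp Y 2 μ) :
    variance (μ[Y|m]) μ + ∫ ω, condVar μ m Y ω ∂μ = variance Y μ := by
  set Z : α → ℝ := μ[Y|m] with hZdef
  have hZ2 : MemLp Z 2 μ := memℒp_two_condexp_aux hm μ hY
  have hY1 : Integrable Y μ := hY.integrable one_le_two
  have hsq_int : Integrable (fun ω => (Y ω - Z ω) ^ 2) μ := by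
    have h : MemLp (fun ω => Y ω - Z ω) 2 μ := hY.sub hZ2
    exact h.integrable_sq
  have hZY_int : Integrable (fun ω => Z ω * Y ω) μ := by
    have h : MemLp (Z • Y) 1 μ := hY.smul hZ2 (p := 2) (q := 2) (r := 1)
    exact memLp_one_iff_integrable.mp h
  have hcondVar : ∫ ω, condVar μ m Y ω ∂μ = ∫ ω, (Y ω - Z ω) ^ 2 ∂μ := by
    unfold _root_.condVar
    exact integral_condExp hm
  have hmul : μ[(Z * Y)|m] =ᵐ[μ] Z * μ[Y|m] :=
    condExp_mul_of_stronglyMeasurable_left stronglyMeasurable_condExp hZY_int hY1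
  have hZY : ∫ ω, Z ω * Y ω ∂μ = ∫ ω, Z ω ^ 2 ∂μ := by
    have h1 : ∫ ω, Z ω * Y ω ∂μ = ∫ ω, (Z * Y) ω ∂μ := rfl
    have h2 : ∫ ω, (μ[(Z * Y)|m]) ω ∂μ = ∫ ω, (Z * Y) ω ∂μ := integral_condExp hm
    rw [h1, ← h2]
    refine integral_congr_ae (hmul.mono fun ω hω => ?_)
    simp only [Pi.mul_apply] at hω ⊢
    rw [hω, ← hZdef, sq]
  have hEZ : ∫ ω, Z ω ∂μ = ∫ ω, Y ω ∂μ := integral_condExp hm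
  have hVY : variance Y μ = (∫ ω, Y ω ^ 2 ∂μ) - (∫ ω, Y ω ∂μ) ^ 2 := by
    rw [variance_eq_sub hY]; rfl
  have hVZ : variance Z μ = (∫ ω, Z ω ^ 2 ∂μ) - (∫ ω, Z ω ∂μ) ^ 2 := by
    rw [variance_eq_sub hZ2]; rfl
  have hexp : ∫ ω, (Y ω - Z ω) ^ 2 ∂μ
      = (∫ ω, Y ω ^ 2 ∂μ) - 2 * (∫ ω, Z ω * Y ω ∂μ) + ∫ ω, Z ω ^ 2 ∂μ := by
    have h1 : ∀ ω, (Y ω - Z ω) ^ 2 = Y ω ^ 2 - 2 * (Z ω * Y ω) + Z ω ^ 2 := fun ω => by ring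
    have hA : Integrable (fun ω => Y ω ^ 2 - 2 * (Z ω * Y ω)) μ :=
      hY.integrable_sq.sub (hZY_int.const_mul 2)
    have step1 : ∫ ω, (Y ω ^ 2 - 2 * (Z ω * Y ω) + Z ω ^ 2) ∂μ
        = (∫ ω, (Y ω ^ 2 - 2 * (Z ω * Y ω)) ∂μ) + ∫ ω, Z ω ^ 2 ∂μ :=
      integral_add hA hZ2.integrable_sq
    have step2 : ∫ ω, (Y ω ^ 2 - 2 * (Z ω * Y ω)) ∂μ
        = (∫ ω, Y ω ^ 2 ∂μ) - ∫ ω, 2 * (Z ω * Y ω) ∂μ :=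
      integral_sub hY.integrable_sq (hZY_int.const_mul 2)
    simp_rw [h1]
    rw [step1, step2, integral_const_mul]
  rw [hcondVar, hexp, hVY, hVZ, hZY, hEZ]
  ring

end Aux

/-- Bivariate formulas for Shapley effects: with `d = 2` and the game
`val u = Var(E[Y ∣ x_u])`, the Shapley value `φ₁` of variable `1` satisfies
`φ₁/σ² = (1/2)(1 + (Var(E[Y∣x₁]) - Var(E[Y∣x₂]))/σ²)
       = (1/2)(1 + (E[Var(Y∣x₂)] - E[Var(Y∣x₁)])/σ²)`, and
`φ₁/φ₂ = (Var(E[Y∣x₁]) + E[Var(Y∣x₂)])/(Var(E[Y∣x₂]) + E[Var(Y∣x₁)])`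
whenever the denominator is nonzero. -/
theorem shapley_bivariate
    {Ω : Type*} [m0 : MeasurableSpace Ω] (μ : Measure Ω) [IsProbabilityMeasure μ]
    (x : Fin 2 → Ω → ℝ) (hx : ∀ j, Measurable (x j))
    (Y : Ω → ℝ) (hY2 : MemLp Y 2 μ)
    (hYmeas : Measurable[mGen x Finset.univ] Y)
    (hσ : 0 < variance Y μ) :
    shapley (fun u => variance (μ[Y | mGen x u]) μ) 0 / variance Y μ
        = (1 / 2) * (1 + (variance (μ[Y | mGen x {0}]) μ
            - variance (μ[Y | mGen x {1}]) μ) / variance Y μ) ∧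
      shapley (fun u => variance (μ[Y | mGen x u]) μ) 0 / variance Y μ
        = (1 / 2) * (1 + ((∫ ω, condVar μ (mGen x {1}) Y ω ∂μ)
            - ∫ ω, condVar μ (mGen x {0}) Y ω ∂μ) / variance Y μ) ∧
      (variance (μ[Y | mGen x {1}]) μ + (∫ ω, condVar μ (mGen x {0}) Y ω ∂μ) ≠ 0 →
        shapley (fun u => variance (μ[Y | mGen x u]) μ) 0
            / shapley (fun u => variance (μ[Y | mGen x u]) μ) 1
          = (variance (μ[Y | mGen x {0}]) μ + ∫ ω, condVar μ (mGen x {1}) Y ω ∂μ)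
            / (variance (μ[Y | mGen x {1}]) μ + ∫ ω, condVar μ (mGen x {0}) Y ω ∂μ)) := by
  have hle : ∀ u : Finset (Fin 2), mGen x u ≤ m0 := fun u =>
    iSup₂_le fun j _ => (hx j).comap_le
  set v : Finset (Fin 2) → ℝ := fun u => variance (μ[Y | mGen x u]) μ with hv
  set σ2 : ℝ := variance Y μ with hσ2
  -- value of the empty coalition
  have hbot : mGen x (∅ : Finset (Fin 2)) = ⊥ := by simp [mGen]
  have hv0 : v ∅ = 0 := by
    show variance (μ[Y | mGen x ∅]) μ = 0
    rw [hbot, condExp_bot]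
    exact variance_const_aux μ _
  -- value of the grand coalition
  have hvuniv : v Finset.univ = σ2 := by
    show variance (μ[Y | mGen x Finset.univ]) μ = σ2
    have : SigmaFinite (μ.trim (hle Finset.univ)) := by infer_instance
    rw [condExp_of_stronglyMeasurable (hle Finset.univ) hYmeas.stronglyMeasurable
      (hY2.integrable one_le_two)]
  -- law of total variance for each single variable
  have h0 : v {0} + ∫ ω, condVar μ (mGen x {0}) Y ω ∂μ = σ2 :=
    total_variance_aux (hle {0}) μ hY2
  have h1 : v {1} + ∫ ω, condVar μ (mGen x {1}) Y ω ∂μ = σ2 :=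
    total_variance_aux (hle {1}) μ hY2
  have e0 : ∫ ω, condVar μ (mGen x {0}) Y ω ∂μ = σ2 - v {0} := by linarith
  have e1 : ∫ ω, condVar μ (mGen x {1}) Y ω ∂μ = σ2 - v {1} := by linarith
  -- explicit Shapley values
  have hp0 : ((Finset.univ.erase (0 : Fin 2)).powerset : Finset (Finset (Fin 2)))
      = {∅, {1}} := by decide
  have hp1 : ((Finset.univ.erase (1 : Fin 2)).powerset : Finset (Finset (Fin 2)))
      = {∅, {0}} := by decide
  have hins0 : insert (0 : Fin 2) ({1} : Finset (Fin 2)) = Finset.univ := by decide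
  have hins1 : insert (1 : Fin 2) ({0} : Finset (Fin 2)) = Finset.univ := by decide
  have hinse0 : insert (0 : Fin 2) (∅ : Finset (Fin 2)) = {0} := by decide
  have hinse1 : insert (1 : Fin 2) (∅ : Finset (Fin 2)) = {1} := by decide
  have hφ0 : shapley v 0 = (1 / 2) * (v {0} + σ2 - v {1}) := by
    rw [shapley, hp0, Finset.sum_pair (by decide : (∅ : Finset (Fin 2)) ≠ {1})]
    simp only [Finset.card_empty, Finset.card_singleton, hinse0, hinse1, hins0,
      hv0, hvuniv]
    norm_num
    ring
  have hφ1 : shapley v 1 = (1 / 2) * (v {1} + σ2 - v {0}) := by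
    rw [shapley, hp1, Finset.sum_pair (by decide : (∅ : Finset (Fin 2)) ≠ {0})]
    simp only [Finset.card_empty, Finset.card_singleton, hinse0, hinse1, hins1,
      hv0, hvuniv]
    norm_num
    ring
  have hσ2ne : σ2 ≠ 0 := ne_of_gt hσ
  refine ⟨?_, ?_, ?_⟩
  · rw [hφ0]
    field_simp
    ring
  · rw [hφ0, e0, e1]
    field_simp
    ring
  · intro _
    rw [hφ0, hφ1, e0, e1, mul_div_mul_left _ _ (by norm_num : (1 / 2 : ℝ) ≠ 0)]
    ring_nf
    simp only [hv]
    ring
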